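/- Let I be a finite index set and let φ = ⋀_{i ∈ I} (x_{i1} ∨ x_{i2} ∨ x_{i3}) be a CNF over a finite variable set X in which every clause consists of exactly three positive literals x_{i1}, x_{i2}, x_{i3} ∈ X. Let q and qᵢ (i ∈ I) be fresh, pairwise distinct variables, let V := X ∪ {qᵢ : i ∈ I} ∪ {q}, and define the knowledge base Γ := { σ ↦ σ x_{i1} ∨ σ x_{i2} ∨ σ x_{i3} : i ∈ I } ∪ { σ ↦ σ x_{i1} ∨ σ x_{i2} ∨ σ qᵢ, σ ↦ σ x_{i1} ∨ σ x_{i3} ∨ σ qᵢ, σ ↦ σ x_{i2} ∨ σ x_{i3} ∨ σ qᵢ : i ∈ I } ∪ { σ ↦ (⋁_{i ∈ I} (σ x_{i1} ∧ σ x_{i2} ∧ σ x_{i3})) ∨ (⋁_{i ∈ I} σ qᵢ) ∨ σ q }, and A := X ∪ {qᵢ : i ∈ I}. Then there exists an assignment on X that sets to true exactly two of x_{i1}, x_{i2}, x_{i3} for every i ∈ I if and only if (Γ, A, q) has an explanation. -/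

import Mathlib

/-- `σ` satisfies the knowledge base `Γ` (a set of formulas, each a Boolean function
on assignments). -/
def SatKB {V : Type*} (Γ : Set ((V → Bool) → Bool)) (σ : V → Bool) : Prop :=
  ∀ γ ∈ Γ, γ σ = true

/-- `σ` satisfies the set of literals given by positive part `P` and negative part `N`. -/
def SatLits {V : Type*} (σ : V → Bool) (P N : Set V) : Prop :=
  (∀ x ∈ P, σ x = true) ∧ (∀ x ∈ N, σ x = false)

/-- `(P, N)` is an explanation for the abduction instance `(Γ, A, φ)`. -/
def IsExplanation {V : Type*} (Γ : Set ((V → Bool) → Bool)) (A : Set V)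
    (φ : (V → Bool) → Bool) (P N : Set V) : Prop :=
  P ⊆ A ∧ N ⊆ A ∧ Disjoint P N ∧
    (∃ σ, SatKB Γ σ ∧ SatLits σ P N) ∧
    (∀ σ, SatKB Γ σ → SatLits σ P N → φ σ = true)

lemma two3 (b0 b1 b2 : Bool) :
    b0.toNat + b1.toNat + b2.toNat = 2 ↔
      ((b0 = true ∨ b1 = true) ∧ (b0 = true ∨ b2 = true) ∧ (b1 = true ∨ b2 = true) ∧
        ¬(b0 = true ∧ b1 = true ∧ b2 = true)) := by
  cases b0 <;> cases b1 <;> cases b2 <;> simp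

/-- Reduction from 2-in-3-SAT to symmetric abduction with monotone knowledge base and a
positive literal manifestation. Variables are `Sum.inl x` for `x ∈ X`,
`Sum.inr (some i)` for `qᵢ` and `Sum.inr none` for `q`. -/
theorem stmt_6 (X : Type*) [Fintype X] (I : Type*) [Fintype I]
    (x : I → Fin 3 → X) (hx : ∀ i, Function.Injective (x i)) :
    let Γ : Set ((X ⊕ Option I → Bool) → Bool) :=
      Set.range (fun i : I => fun σ : X ⊕ Option I → Bool =>
          σ (Sum.inl (x i 0)) || σ (Sum.inl (x i 1)) || σ (Sum.inl (x i 2))) ∪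
      Set.range (fun i : I => fun σ : X ⊕ Option I → Bool =>
          σ (Sum.inl (x i 0)) || σ (Sum.inl (x i 1)) || σ (Sum.inr (some i))) ∪
      Set.range (fun i : I => fun σ : X ⊕ Option I → Bool =>
          σ (Sum.inl (x i 0)) || σ (Sum.inl (x i 2)) || σ (Sum.inr (some i))) ∪
      Set.range (fun i : I => fun σ : X ⊕ Option I → Bool =>
          σ (Sum.inl (x i 1)) || σ (Sum.inl (x i 2)) || σ (Sum.inr (some i))) ∪
      {fun σ : X ⊕ Option I → Bool =>
          decide (∃ i : I, σ (Sum.inl (x i 0)) = true ∧ σ (Sum.inl (x i 1)) = true ∧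
            σ (Sum.inl (x i 2)) = true) ||
          decide (∃ i : I, σ (Sum.inr (some i)) = true) || σ (Sum.inr none)}
    let A : Set (X ⊕ Option I) := {v | v ≠ Sum.inr none}
    (∃ a : X → Bool, ∀ i : I,
        (a (x i 0)).toNat + (a (x i 1)).toNat + (a (x i 2)).toNat = 2) ↔
      ∃ P N : Set (X ⊕ Option I),
        IsExplanation Γ A (fun σ => σ (Sum.inr none)) P N := by
  intro Γ A
  constructor
  · rintro ⟨a, ha⟩
    refine ⟨Sum.inl '' {y | a y = true},
      Sum.inl '' {y | a y = false} ∪ Set.range (fun i : I => Sum.inr (some i)),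
      ?_, ?_, ?_, ?_, ?_⟩
    · rintro v ⟨y, _, rfl⟩; simp [A]
    · rintro v (⟨y, _, rfl⟩ | ⟨i, rfl⟩) <;> simp [A]
    · rw [Set.disjoint_left]
      rintro v ⟨y, hy, rfl⟩ (⟨z, hz, h⟩ | ⟨i, h⟩)
      · obtain rfl : z = y := by simpa using h
        simp only [Set.mem_setOf_eq] at hy hz
        rw [hy] at hz; exact Bool.noConfusion hz
      · exact absurd h (by simp)
    · refine ⟨Sum.elim a (fun o => o.elim true (fun _ => false)), ?_, ?_, ?_⟩
      · rintro γ ((((⟨i, rfl⟩ | ⟨i, rfl⟩) | ⟨i, rfl⟩) | ⟨i, rfl⟩) | rfl)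
        · obtain ⟨h01, h02, h12, h3⟩ := (two3 _ _ _).mp (ha i)
          simp only [Sum.elim_inl, Bool.or_eq_true]; tauto
        · obtain ⟨h01, h02, h12, h3⟩ := (two3 _ _ _).mp (ha i)
          simp only [Sum.elim_inl, Sum.elim_inr, Option.elim, Bool.or_eq_true]; tauto
        · obtain ⟨h01, h02, h12, h3⟩ := (two3 _ _ _).mp (ha i)
          simp only [Sum.elim_inl, Sum.elim_inr, Option.elim, Bool.or_eq_true]; tauto
        · obtain ⟨h01, h02, h12, h3⟩ := (two3 _ _ _).mp (ha i)
          simp only [Sum.elim_inl, Sum.elim_inr, Option.elim, Bool.or_eq_true]; tauto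
        · simp
      · rintro v ⟨y, hy, rfl⟩; simpa using hy
      · rintro v (⟨y, hy, rfl⟩ | ⟨i, rfl⟩) <;> simp_all
    · intro σ hKB hlits
      have hσinl : ∀ y, σ (Sum.inl y) = a y := by
        intro y
        cases hy : a y
        · exact hlits.2 _ (Or.inl ⟨y, hy, rfl⟩)
        · exact hlits.1 _ ⟨y, hy, rfl⟩
      have hq : ∀ i, σ (Sum.inr (some i)) = false := fun i => hlits.2 _ (Or.inr ⟨i, rfl⟩)
      have hlast := hKB _ (Or.inr rfl)
      have d1 : ¬ ∃ i : I, σ (Sum.inl (x i 0)) = true ∧ σ (Sum.inl (x i 1)) = true ∧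
          σ (Sum.inl (x i 2)) = true := by
        rintro ⟨i, h0, h1, h2⟩
        rw [hσinl] at h0 h1 h2
        exact ((two3 _ _ _).mp (ha i)).2.2.2 ⟨h0, h1, h2⟩
      simpa [d1, hq] using hlast
  · rintro ⟨P, N, hPA, hNA, hdisj, ⟨σ, hKB, hlits⟩, hent⟩
    set σ' : X ⊕ Option I → Bool :=
      Sum.elim (fun y => σ (Sum.inl y))
        (fun o => o.elim false (fun i => σ (Sum.inr (some i)))) with hσ'
    have hinl : ∀ y, σ' (Sum.inl y) = σ (Sum.inl y) := by intro y; simp [σ']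
    have hqi : ∀ i, σ' (Sum.inr (some i)) = σ (Sum.inr (some i)) := by intro i; simp [σ']
    have hagree : ∀ v, v ≠ Sum.inr none → σ' v = σ v := by
      rintro (y | _ | i) hv
      · exact hinl y
      · exact absurd rfl hv
      · exact hqi i
    have hlits' : SatLits σ' P N := by
      constructor
      · intro v hv; rw [hagree v (hPA hv)]; exact hlits.1 v hv
      · intro v hv; rw [hagree v (hNA hv)]; exact hlits.2 v hv
    have hnot : ¬ SatKB Γ σ' := by
      intro h
      have := hent σ' h hlits'
      simp [σ'] at this
    have key : ¬ ((∃ i : I, σ (Sum.inl (x i 0)) = true ∧ σ (Sum.inl (x i 1)) = true ∧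
        σ (Sum.inl (x i 2)) = true) ∨ (∃ i : I, σ (Sum.inr (some i)) = true)) := by
      intro hcase
      apply hnot
      rintro γ ((((⟨i, rfl⟩ | ⟨i, rfl⟩) | ⟨i, rfl⟩) | ⟨i, rfl⟩) | rfl)
      · simpa only [hinl, hqi] using hKB _ (Or.inl (Or.inl (Or.inl (Or.inl ⟨i, rfl⟩))))
      · simpa only [hinl, hqi] using hKB _ (Or.inl (Or.inl (Or.inl (Or.inr ⟨i, rfl⟩))))
      · simpa only [hinl, hqi] using hKB _ (Or.inl (Or.inl (Or.inr ⟨i, rfl⟩)))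
      · simpa only [hinl, hqi] using hKB _ (Or.inl (Or.inr ⟨i, rfl⟩))
      · simp only [hinl, hqi, Bool.or_eq_true, decide_eq_true_eq]
        rcases hcase with h | h
        · exact Or.inl (Or.inl h)
        · exact Or.inl (Or.inr h)
    push_neg at key
    obtain ⟨h1, h2⟩ := key
    have h2' : ∀ i, σ (Sum.inr (some i)) = false := by
      intro i
      have := h2 i
      simp at this
      exact this
    refine ⟨fun y => σ (Sum.inl y), fun i => (two3 _ _ _).mpr ⟨?_, ?_, ?_, ?_⟩⟩
    · have h := hKB _ (Or.inl (Or.inl (Or.inl (Or.inr ⟨i, rfl⟩))))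
      simp only [h2', Bool.or_false, Bool.or_eq_true] at h
      exact h
    · have h := hKB _ (Or.inl (Or.inl (Or.inr ⟨i, rfl⟩)))
      simp only [h2', Bool.or_false, Bool.or_eq_true] at h
      exact h
    · have h := hKB _ (Or.inl (Or.inr ⟨i, rfl⟩))
      simp only [h2', Bool.or_false, Bool.or_eq_true] at h
      exact h
    · rintro ⟨ha0, ha1, ha2⟩
      exact h1 i ha0 ha1 ha2
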